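/- Let Π ∈ S^{q+r} with Π_{22} ≤ 0, ker Π_{22} ⊆ ker Π_{12} and Π_{11} - Π_{12} Π_{22}† Π_{21} ≥ 0. Then the set Z_r(Π) = { Z ∈ ℝ^{r×q} : [I; Z]ᵀ Π [I; Z] ≥ 0 } is convex. -/

import Mathlib

open scoped Matrix

private lemma psd_smul {n : ℕ} {A : Matrix (Fin n) (Fin n) ℝ} (hA : A.PosSemidef)
    {c : ℝ} (hc : 0 ≤ c) : (c • A).PosSemidef := by
  refine ⟨?_, fun x => ?_⟩
  · unfold Matrix.IsHermitian
    rw [Matrix.conjTranspose_smul]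
    have h : Aᵀ = A := by simpa [Matrix.IsSymm] using hA.isHermitian
    simp [h]
  · exact (hA.smul hc).2 x

/-- Convexity of the solution set of a QMI: for Π with Π₂₂ ⪯ 0,
ker Π₂₂ ⊆ ker Π₁₂ and Π₁₁ - Π₁₂ Π₂₂† Π₂₁ ⪰ 0, the set
Z_r(Π) = {Z : [I;Z]ᵀ Π [I;Z] ⪰ 0} is convex. -/
theorem qmi_solution_set_convex
    (q r : ℕ)
    (P11 : Matrix (Fin q) (Fin q) ℝ) (P12 : Matrix (Fin q) (Fin r) ℝ)
    (P22 : Matrix (Fin r) (Fin r) ℝ)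
    (h11 : P11ᵀ = P11) (h22 : P22ᵀ = P22)
    (hneg : (-P22).PosSemidef)
    (hker : ∀ x : Fin r → ℝ, P22.mulVec x = 0 → P12.mulVec x = 0)
    -- G is the Moore–Penrose pseudoinverse of Π₂₂
    (G : Matrix (Fin r) (Fin r) ℝ)
    (hG1 : P22 * G * P22 = P22) (hG2 : G * P22 * G = G)
    (hG3 : (P22 * G)ᵀ = P22 * G) (hG4 : (G * P22)ᵀ = G * P22)
    (hSchur : (P11 - P12 * G * P12ᵀ).PosSemidef) :
    Convex ℝ {Z : Matrix (Fin r) (Fin q) ℝ |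
      ((Matrix.fromRows (1 : Matrix (Fin q) (Fin q) ℝ) Z)ᵀ *
        Matrix.fromBlocks P11 P12 P12ᵀ P22 *
        Matrix.fromRows (1 : Matrix (Fin q) (Fin q) ℝ) Z).PosSemidef} := by
  have key : ∀ Z : Matrix (Fin r) (Fin q) ℝ,
      ((Matrix.fromRows (1 : Matrix (Fin q) (Fin q) ℝ) Z)ᵀ *
        Matrix.fromBlocks P11 P12 P12ᵀ P22 *
        Matrix.fromRows (1 : Matrix (Fin q) (Fin q) ℝ) Z)
      = P11 + P12 * Z + Zᵀ * P12ᵀ + Zᵀ * P22 * Z := by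
    intro Z
    rw [Matrix.mul_assoc, Matrix.fromBlocks_mul_fromRows, Matrix.transpose_fromRows,
      Matrix.fromCols_mul_fromRows]
    simp [Matrix.mul_add, Matrix.mul_assoc]
    abel
  intro A hA B hB t s ht hs hts
  simp only [Set.mem_setOf_eq, key] at hA hB ⊢
  have hid : P11 + P12 * (t • A + s • B) + (t • A + s • B)ᵀ * P12ᵀ +
      (t • A + s • B)ᵀ * P22 * (t • A + s • B)
      = t • (P11 + P12 * A + Aᵀ * P12ᵀ + Aᵀ * P22 * A)
        + s • (P11 + P12 * B + Bᵀ * P12ᵀ + Bᵀ * P22 * B)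
        + (t * s) • ((A - B)ᵀ * (-P22) * (A - B)) := by
    have hs' : s = 1 - t := by linarith
    subst hs'
    simp only [Matrix.transpose_add, Matrix.transpose_smul, Matrix.transpose_sub,
      Matrix.add_mul, Matrix.mul_add, Matrix.sub_mul, Matrix.mul_sub,
      Matrix.smul_mul, Matrix.mul_smul, Matrix.mul_neg, Matrix.neg_mul,
      smul_add, smul_sub, smul_smul, smul_neg]
    module
  rw [hid]
  have h3 : ((A - B)ᵀ * (-P22) * (A - B)).PosSemidef := by
    have := hneg.conjTranspose_mul_mul_same (A - B)
    simpa using this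
  exact ((psd_smul hA ht).add (psd_smul hB hs)).add (psd_smul h3 (mul_nonneg ht hs))
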